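/- In the EIITC setup, for every index i ∈ ι one has R_N − R*_N(i) ≥ (1/N)·log(ψ_1 i / ψ_{N+1} i) + (1/N)·Σ_{k=1}^{N} log(1 − c_k) + γ·r − γ/r, where R_N := (1/N) Σ_{k=1}^{N} [log(ψ_k ⋄ s_k) + log(1 − c_k)] is the exponential growth rate of the EIITC portfolio with transaction costs and R*_N(i) := (1/N) Σ_{k=1}^{N} log(s_k i) is the exponential growth rate of the single currency pair i. -/

import Mathlib

open Finset

/-- Universality bound for the EIITC update rule: the exponential growth rate of the
EIITC portfolio with transaction costs exceeds the growth rate of any single currency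
pair `i` up to the boundary term `(1/N)·log(ψ₁ i/ψ_{N+1} i)`, the transaction-cost
term `(1/N)·∑ log(1-c_k)`, and `γ·r - γ/r`. -/
theorem EIITC_growth_rate_bound
    {ι : Type*} [Fintype ι] [Nonempty ι]
    (r γ : ℝ) (hr0 : 0 < r) (hr1 : r < 1) (hγ : 0 < γ)
    (N : ℕ) (hN : 1 ≤ N)
    (s s' : ℕ → ι → ℝ) (ψ ψ' : ℕ → ι → ℝ)
    (hs_lb : ∀ k ∈ Finset.Icc 1 N, ∀ i, r ≤ s k i)
    (hs_max : ∀ k ∈ Finset.Icc 1 N, (∀ i, s k i ≤ 1) ∧ ∃ i, s k i = 1)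
    (d : ℕ → ℕ) (a : ℕ → ℕ → ℝ)
    (hd : ∀ k ∈ Finset.Icc 1 N, 1 ≤ d k ∧ d k ≤ k)
    (ha_nonneg : ∀ k ∈ Finset.Icc 1 N, ∀ l ∈ Finset.Icc 1 (d k), 0 ≤ a k l)
    (ha_sum : ∀ k ∈ Finset.Icc 1 N, ∑ l ∈ Finset.Icc 1 (d k), a k l = 1)
    (hs' : ∀ k ∈ Finset.Icc 1 N, ∀ i,
      s' (k + 1) i = ∑ l ∈ Finset.Icc 1 (d k), a k l * s (k - l + 1) i)
    (hψ1_pos : ∀ i, 0 < ψ 1 i) (hψ1_sum : ∑ i, ψ 1 i = 1)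
    (hψ' : ∀ k ∈ Finset.Icc 1 N, ∀ i,
      ψ' k i = ψ k i * s k i / (∑ j, ψ k j * s k j))
    (hupdate : ∀ k ∈ Finset.Icc 1 N, ∀ i,
      ψ (k + 1) i = ψ' k i * Real.exp (γ * s' (k + 1) i / (∑ j, ψ' k j * s' (k + 1) j)) /
        (∑ j, ψ' k j * Real.exp (γ * s' (k + 1) j / (∑ j', ψ' k j' * s' (k + 1) j'))))
    (c : ℕ → ℝ) (hc : ∀ k ∈ Finset.Icc 1 N, c k ∈ Set.Ico (0 : ℝ) 1)
    (i : ι) :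
    (1 / (N : ℝ)) * Real.log (ψ 1 i / ψ (N + 1) i)
      + (1 / (N : ℝ)) * ∑ k ∈ Finset.Icc 1 N, Real.log (1 - c k)
      + γ * r - γ / r
    ≤ (1 / (N : ℝ)) * ∑ k ∈ Finset.Icc 1 N,
        (Real.log (∑ j, ψ k j * s k j) + Real.log (1 - c k))
      - (1 / (N : ℝ)) * ∑ k ∈ Finset.Icc 1 N, Real.log (s k i) := by
  have step : ∀ k ∈ Finset.Icc 1 N, (∀ j, 0 < ψ k j) → (∑ j, ψ k j) = 1 →
      (∀ j, 0 < ψ (k+1) j) ∧ (∑ j, ψ (k+1) j) = 1 ∧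
      Real.log (ψ k i) - Real.log (ψ (k+1) i) + (γ*r - γ/r) ≤
        Real.log (∑ j, ψ k j * s k j) - Real.log (s k i) := by
    intro k hk hpos hsum
    obtain ⟨hk1, hkN⟩ := Finset.mem_Icc.mp hk
    have hslb := hs_lb k hk
    have hsub := (hs_max k hk).1
    have hspos : ∀ j, 0 < s k j := fun j => lt_of_lt_of_le hr0 (hslb j)
    set W := ∑ j, ψ k j * s k j with hWdef
    have hW_lb : r ≤ W := by
      calc r = ∑ j, ψ k j * r := by rw [← Finset.sum_mul, hsum, one_mul]
      _ ≤ W := Finset.sum_le_sum fun j _ => mul_le_mul_of_nonneg_left (hslb j) (hpos j).le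
    have hW_ub : W ≤ 1 := by
      calc W ≤ ∑ j, ψ k j * 1 :=
            Finset.sum_le_sum fun j _ => mul_le_mul_of_nonneg_left (hsub j) (hpos j).le
      _ = 1 := by simp [hsum]
    have hW_pos : 0 < W := lt_of_lt_of_le hr0 hW_lb
    have hψ'pos : ∀ j, 0 < ψ' k j := by
      intro j; rw [hψ' k hk j, ← hWdef]
      exact div_pos (mul_pos (hpos j) (hspos j)) hW_pos
    have hψ'sum : ∑ j, ψ' k j = 1 := by
      have h1 : ∑ j, ψ' k j = (∑ j, ψ k j * s k j)/W := by
        rw [Finset.sum_div]; exact Finset.sum_congr rfl fun j _ => by rw [hψ' k hk j, ← hWdef]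
      rw [h1, ← hWdef, div_self hW_pos.ne']
    have hmem : ∀ l ∈ Finset.Icc 1 (d k), (k - l + 1) ∈ Finset.Icc 1 N := by
      intro l hl
      obtain ⟨hl1, hld⟩ := Finset.mem_Icc.mp hl
      have hdk := (hd k hk).2
      exact Finset.mem_Icc.mpr ⟨by omega, by omega⟩
    have hasum := ha_sum k hk
    have hs'lb : ∀ j, r ≤ s' (k+1) j := by
      intro j
      rw [hs' k hk j]
      calc r = ∑ l ∈ Finset.Icc 1 (d k), a k l * r := by rw [← Finset.sum_mul, hasum, one_mul]
      _ ≤ _ := Finset.sum_le_sum fun l hl =>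
          mul_le_mul_of_nonneg_left (hs_lb _ (hmem l hl) j) (ha_nonneg k hk l hl)
    have hs'ub : ∀ j, s' (k+1) j ≤ 1 := by
      intro j
      rw [hs' k hk j]
      calc (∑ l ∈ Finset.Icc 1 (d k), a k l * s (k-l+1) j)
          ≤ ∑ l ∈ Finset.Icc 1 (d k), a k l * 1 := Finset.sum_le_sum fun l hl =>
            mul_le_mul_of_nonneg_left ((hs_max _ (hmem l hl)).1 j) (ha_nonneg k hk l hl)
      _ = 1 := by simp [hasum]
    set D := ∑ j, ψ' k j * s' (k+1) j with hDdef
    have hD_lb : r ≤ D := by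
      calc r = ∑ j, ψ' k j * r := by rw [← Finset.sum_mul, hψ'sum, one_mul]
      _ ≤ D := Finset.sum_le_sum fun j _ => mul_le_mul_of_nonneg_left (hs'lb j) (hψ'pos j).le
    have hD_ub : D ≤ 1 := by
      calc D ≤ ∑ j, ψ' k j * 1 :=
            Finset.sum_le_sum fun j _ => mul_le_mul_of_nonneg_left (hs'ub j) (hψ'pos j).le
      _ = 1 := by simp [hψ'sum]
    have hD_pos : 0 < D := lt_of_lt_of_le hr0 hD_lb
    have hE_lb : ∀ j, γ * r ≤ γ * s' (k+1) j / D := by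
      intro j
      have h1 : γ * r / 1 ≤ γ * s' (k+1) j / D :=
        div_le_div₀ (mul_nonneg hγ.le (hr0.trans_le (hs'lb j)).le)
          (mul_le_mul_of_nonneg_left (hs'lb j) hγ.le) hD_pos hD_ub
      simpa using h1
    have hE_ub : ∀ j, γ * s' (k+1) j / D ≤ γ / r := by
      intro j
      have h1 : γ * s' (k+1) j ≤ γ := by nlinarith [hs'ub j]
      exact div_le_div₀ hγ.le h1 hr0 hD_lb
    set Z := ∑ j, ψ' k j * Real.exp (γ * s' (k+1) j / D) with hZdef
    have hZ_pos : 0 < Z :=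
      Finset.sum_pos (fun j _ => mul_pos (hψ'pos j) (Real.exp_pos _)) Finset.univ_nonempty
    have hZ_ub : Z ≤ Real.exp (γ / r) := by
      calc Z ≤ ∑ j, ψ' k j * Real.exp (γ/r) := Finset.sum_le_sum fun j _ =>
            mul_le_mul_of_nonneg_left (Real.exp_le_exp.mpr (hE_ub j)) (hψ'pos j).le
      _ = Real.exp (γ/r) := by rw [← Finset.sum_mul, hψ'sum, one_mul]
    have hupk := hupdate k hk
    have hψpos' : ∀ j, 0 < ψ (k+1) j := by
      intro j
      rw [hupk j, ← hDdef, ← hZdef]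
      exact div_pos (mul_pos (hψ'pos j) (Real.exp_pos _)) hZ_pos
    have hψsum' : ∑ j, ψ (k+1) j = 1 := by
      calc ∑ j, ψ (k+1) j = ∑ j, ψ' k j * Real.exp (γ * s' (k+1) j / D) / Z :=
            Finset.sum_congr rfl fun j _ => by rw [hupk j, ← hDdef, ← hZdef]
      _ = Z / Z := by rw [← Finset.sum_div, ← hZdef]
      _ = 1 := div_self hZ_pos.ne'
    have hlogZ : Real.log Z ≤ γ / r := (Real.log_le_iff_le_exp hZ_pos).mpr hZ_ub
    have hlog : Real.log (ψ (k+1) i) =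
        Real.log (ψ k i) + Real.log (s k i) - Real.log W + γ * s' (k+1) i / D - Real.log Z := by
      rw [hupk i, ← hDdef, ← hZdef, hψ' k hk i, ← hWdef]
      rw [Real.log_div
            (ne_of_gt (mul_pos (div_pos (mul_pos (hpos i) (hspos i)) hW_pos) (Real.exp_pos _)))
            hZ_pos.ne',
          Real.log_mul (ne_of_gt (div_pos (mul_pos (hpos i) (hspos i)) hW_pos))
            (Real.exp_ne_zero _),
          Real.log_exp,
          Real.log_div (ne_of_gt (mul_pos (hpos i) (hspos i))) hW_pos.ne',
          Real.log_mul (hpos i).ne' (hspos i).ne']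
    exact ⟨hψpos', hψsum', by linarith [hE_lb i, hlogZ]⟩
  have aux : ∀ k, k ≤ N → (∀ j, 0 < ψ (k+1) j) ∧ (∑ j, ψ (k+1) j) = 1 ∧
      Real.log (ψ 1 i) - Real.log (ψ (k+1) i) + (k : ℝ) * (γ*r - γ/r) ≤
        ∑ m ∈ Finset.Icc 1 k, (Real.log (∑ j, ψ m j * s m j) - Real.log (s m i)) := by
    intro k
    induction k with
    | zero => intro _; refine ⟨hψ1_pos, hψ1_sum, by simp⟩
    | succ k ih =>
      intro hk1
      obtain ⟨hp, hs1, hineq⟩ := ih (by omega)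
      obtain ⟨hp', hs1', hkey⟩ := step (k+1) (Finset.mem_Icc.mpr ⟨by omega, hk1⟩) hp hs1
      refine ⟨hp', hs1', ?_⟩
      rw [Finset.sum_Icc_succ_top (by omega : 1 ≤ k + 1)]
      push_cast
      linarith
  obtain ⟨hpN, _, hmain⟩ := aux N le_rfl -- hN : 1 ≤ N? need N ≤ N
  have hNpos : (0:ℝ) < N := by exact_mod_cast Nat.lt_of_lt_of_le Nat.zero_lt_one hN
  have hinv : (0:ℝ) < 1 / N := by positivity
  rw [Real.log_div (hψ1_pos i).ne' (hpN i).ne']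
  have hsplit : ∑ k ∈ Finset.Icc 1 N, (Real.log (∑ j, ψ k j * s k j) + Real.log (1 - c k))
      = ∑ k ∈ Finset.Icc 1 N, Real.log (∑ j, ψ k j * s k j)
        + ∑ k ∈ Finset.Icc 1 N, Real.log (1 - c k) := Finset.sum_add_distrib
  have hsub : ∑ m ∈ Finset.Icc 1 N, (Real.log (∑ j, ψ m j * s m j) - Real.log (s m i))
      = ∑ m ∈ Finset.Icc 1 N, Real.log (∑ j, ψ m j * s m j)
        - ∑ m ∈ Finset.Icc 1 N, Real.log (s m i) := Finset.sum_sub_distrib _ _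
  have hmul := mul_le_mul_of_nonneg_left hmain hinv.le
  have hcancel : (1 / (N:ℝ)) * ((N:ℝ) * (γ*r - γ/r)) = γ*r - γ/r := by
    field_simp
  rw [hsub] at hmain
  rw [hsplit]
  nlinarith [hmain, hinv]
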